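/- If S has distribution Ψ_κ(μ, σ²), then Var(S) = σ² + (σ² + κ − μ)·π_κ, where π_κ = P(S = κ). -/

import Mathlib

open MeasureTheory Filter

private lemma telescope_tsum {d : ℕ → ℝ} (h : Summable fun n => d n - d (n + 1))
    (h0 : Tendsto d atTop (nhds 0)) : ∑' n, (d n - d (n + 1)) = d 0 := by
  refine HasSum.tsum_eq ?_
  rw [h.hasSum_iff_tendsto_nat]
  have : ∀ N : ℕ, ∑ n ∈ Finset.range N, (d n - d (n + 1)) = d 0 - d N := by
    intro N; exact Finset.sum_range_sub' d N
  simp only [this]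
  simpa using tendsto_const_nhds.sub h0

private lemma decay_summable {u : ℕ → ℝ} {σ2 c : ℝ} (hσ : 0 < σ2) (hc : 0 < c)
    (hu : ∀ n, 0 ≤ u n) (hrec : ∀ n : ℕ, (c + n) * u (n + 1) = σ2 * u n) :
    Summable fun n : ℕ => ((n : ℝ) + 1) ^ 2 * u n := by
  set N : ℕ := ⌈2 * σ2⌉₊ with hN
  have hhalf : ∀ n, N ≤ n → u (n + 1) ≤ u n / 2 := by
    intro n hn
    have h2 : 2 * σ2 ≤ (n : ℝ) := le_trans (Nat.le_ceil _) (by exact_mod_cast hn)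
    have hcn : 2 * σ2 ≤ c + n := by linarith
    have := hrec n
    nlinarith [hu (n + 1), hu n]
  have hgeom : ∀ k : ℕ, u (N + k) ≤ u N * (1 / 2) ^ k := by
    intro k
    induction k with
    | zero => simp
    | succ k ih =>
      have := hhalf (N + k) (Nat.le_add_right _ _)
      calc u (N + (k + 1)) = u ((N + k) + 1) := by ring_nf
        _ ≤ u (N + k) / 2 := this
        _ ≤ (u N * (1 / 2) ^ k) / 2 := by linarith
        _ = u N * (1 / 2) ^ (k + 1) := by ring
  have hg2 : Summable fun k : ℕ => ((k : ℝ) + 1) ^ 2 * (1 / 2 : ℝ) ^ k := by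
    have h0 : Summable fun k : ℕ => ((1 : ℝ) / 2) ^ k := summable_geometric_of_lt_one (by norm_num) (by norm_num)
    have h1 : Summable fun k : ℕ => (k : ℝ) * (1 / 2 : ℝ) ^ k :=
      by simpa using summable_pow_mul_geometric_of_norm_lt_one 1 (r := (1/2 : ℝ)) (by norm_num)
    have h2 : Summable fun k : ℕ => (k : ℝ) ^ 2 * (1 / 2 : ℝ) ^ k :=
      summable_pow_mul_geometric_of_norm_lt_one 2 (by norm_num)
    have := (h2.add ((h1.mul_left 2).add h0))
    refine this.congr fun k => ?_
    ring
  have hshift : Summable fun k : ℕ => ((N + k : ℝ) + 1) ^ 2 * u (N + k) := by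
    refine Summable.of_nonneg_of_le (fun k => mul_nonneg (by positivity) (hu _)) (fun k => ?_)
      ((hg2.mul_left (u N * ((N : ℝ) + 1) ^ 2)))
    have hb : ((N : ℝ) + k + 1) ^ 2 ≤ ((N : ℝ) + 1) ^ 2 * ((k : ℝ) + 1) ^ 2 := by
      have h1 : (0:ℝ) ≤ (N:ℝ) := Nat.cast_nonneg N
      have h2 : (0:ℝ) ≤ (k:ℝ) := Nat.cast_nonneg k
      nlinarith [mul_nonneg h1 h2, mul_nonneg (mul_nonneg h1 h2) (mul_nonneg h1 h2), mul_nonneg (mul_nonneg h1 h2) h1, mul_nonneg (mul_nonneg h1 h2) h2]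
    calc ((N : ℝ) + k + 1) ^ 2 * u (N + k)
        ≤ (((N : ℝ) + 1) ^ 2 * ((k : ℝ) + 1) ^ 2) * (u N * (1 / 2) ^ k) := by
          have h3 := hgeom k
          have h4 := hu (N + k)
          have h5 : (0:ℝ) ≤ ((N : ℝ) + k + 1) ^ 2 := by positivity
          nlinarith [sq_nonneg ((N:ℝ)+1), sq_nonneg ((k:ℝ)+1)]
      _ = u N * ((N : ℝ) + 1) ^ 2 * (((k : ℝ) + 1) ^ 2 * (1 / 2) ^ k) := by ring
  have := (summable_nat_add_iff (f := fun n => ((n : ℝ) + 1) ^ 2 * u n) N).mp ?_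
  · exact this
  · refine hshift.congr fun k => ?_
    simp [add_comm k N, add_comm (k:ℝ) (N:ℝ)]

private lemma summable_weighted {u : ℕ → ℝ} (hu : ∀ n, 0 ≤ u n)
    (hsum : Summable fun n : ℕ => ((n : ℝ) + 1) ^ 2 * u n) (g : ℕ → ℝ) (C : ℝ)
    (hg : ∀ n, |g n| ≤ C * ((n : ℝ) + 1) ^ 2) :
    Summable fun n : ℕ => g n * u n := by
  refine Summable.of_norm (Summable.of_nonneg_of_le (fun n => norm_nonneg _)
    (fun n => ?_) (hsum.mul_left C))
  rw [Real.norm_eq_abs, abs_mul, abs_of_nonneg (hu n)]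
  calc |g n| * u n ≤ (C * ((n : ℝ) + 1) ^ 2) * u n := by
        exact mul_le_mul_of_nonneg_right (hg n) (hu n)
    _ = C * (((n : ℝ) + 1) ^ 2 * u n) := by ring

private lemma tail_sum {u : ℕ → ℝ} {σ2 b : ℝ} (hσ : 0 < σ2) (hc : 0 < σ2 + b + 1)
    (hu : ∀ n, 0 ≤ u n)
    (hrec : ∀ n : ℕ, (σ2 + b + 1 + n) * u (n + 1) = σ2 * u n) :
    Summable (fun n : ℕ => (b + (n : ℝ)) ^ 2 * u n) ∧ Summable u ∧
      ∑' n : ℕ, (b + (n : ℝ)) ^ 2 * u n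
        = b ^ 2 * u 0 + σ2 * b * u 0 + σ2 * ∑' n, u n := by
  have hM : Summable fun n : ℕ => ((n : ℝ) + 1) ^ 2 * u n :=
    decay_summable hσ hc hu hrec
  have habs : ∀ n : ℕ, |b + (n : ℝ)| ≤ (|b| + 1) * ((n : ℝ) + 1) := by
    intro n
    have h1 : |b + (n : ℝ)| ≤ |b| + (n : ℝ) := by
      calc |b + (n : ℝ)| ≤ |b| + |(n : ℝ)| := abs_add_le _ _
        _ = |b| + (n : ℝ) := by rw [Nat.abs_cast]
    have h2 : (0:ℝ) ≤ |b| := abs_nonneg b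
    have h3 : (0:ℝ) ≤ (n : ℝ) := Nat.cast_nonneg n
    nlinarith [mul_nonneg h2 h3]
  have hSq : Summable fun n : ℕ => (b + (n : ℝ)) ^ 2 * u n := by
    refine summable_weighted hu hM _ ((|b| + 1) ^ 2) fun n => ?_
    rw [abs_of_nonneg (sq_nonneg _), ← mul_pow]
    have := habs n
    have h4 : (0:ℝ) ≤ |b + (n:ℝ)| := abs_nonneg _
    calc (b + (n : ℝ)) ^ 2 = |b + (n : ℝ)| ^ 2 := (sq_abs _).symm
      _ ≤ ((|b| + 1) * ((n : ℝ) + 1)) ^ 2 := by nlinarith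
  have hU : Summable u := by
    refine (summable_weighted hu hM (fun _ => 1) 1 fun n => ?_).congr fun n => by ring
    rw [abs_one]
    nlinarith [Nat.cast_nonneg (α := ℝ) n]
  have hd : Summable (fun n : ℕ => (b + (n : ℝ)) * u n) := by
    refine summable_weighted hu hM _ (|b| + 1) fun n => ?_
    have := habs n
    have h2 : (0:ℝ) ≤ |b| := abs_nonneg b
    have h3 : (0:ℝ) ≤ (n : ℝ) := Nat.cast_nonneg n
    nlinarith [mul_nonneg (mul_nonneg (add_nonneg h2 zero_le_one) (add_nonneg h3 zero_le_one)) h3]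
  set d : ℕ → ℝ := fun n => (b + (n : ℝ)) * u n with hdd
  have hd1 : Summable (fun n : ℕ => d (n + 1)) := (summable_nat_add_iff 1).2 hd
  have htel : Summable (fun n : ℕ => d n - d (n + 1)) := hd.sub hd1
  have htel0 : Tendsto d atTop (nhds 0) := hd.tendsto_atTop_zero
  have tele : ∑' n : ℕ, (d n - d (n + 1)) = b * u 0 := by
    rw [telescope_tsum htel htel0]; simp [hdd]
  have hptw : ∀ n : ℕ, (b + ((n : ℝ) + 1)) ^ 2 * u (n + 1)
      = σ2 * (d n - d (n + 1)) + σ2 * u n := by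
    intro n
    simp only [hdd]
    push_cast
    linear_combination (b + (n : ℝ) + 1) * hrec n
  refine ⟨hSq, hU, ?_⟩
  rw [hSq.tsum_eq_zero_add]
  have hre : (fun n : ℕ => (b + ((n + 1 : ℕ) : ℝ)) ^ 2 * u (n + 1))
      = fun n : ℕ => σ2 * (d n - d (n + 1)) + σ2 * u n := by
    funext n
    push_cast
    exact hptw n
  rw [hre]
  rw [Summable.tsum_add ((htel.mul_left σ2)) (hU.mul_left σ2), tsum_mul_left, tsum_mul_left, tele]
  push_cast
  ring


set_option maxHeartbeats 1000000


private lemma int_split {f : ℤ → ℝ} (κ : ℤ) (h1 : Summable fun n : ℕ => f (κ + n))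
    (h2 : Summable fun n : ℕ => f (κ - 1 - n)) :
    HasSum f ((∑' n : ℕ, f (κ + n)) + ∑' n : ℕ, f (κ - 1 - n)) := by
  have hnat : HasSum (fun n : ℕ => f (κ + (n : ℤ))) (∑' n : ℕ, f (κ + n)) := h1.hasSum
  have hneg : HasSum (fun n : ℕ => f (κ + (-((n : ℤ) + 1)))) (∑' n : ℕ, f (κ - 1 - n)) := by
    have e : (fun n : ℕ => f (κ + (-((n : ℤ) + 1)))) = fun n : ℕ => f (κ - 1 - n) := by
      funext n; congr 1; ring
    rw [e]; exact h2.hasSum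
  have h := HasSum.of_nat_of_neg_add_one (f := fun m : ℤ => f (κ + m)) hnat hneg
  have e2 : (fun m : ℤ => f (κ + m)) = f ∘ (Equiv.addLeft κ) := by
    funext m; simp
  rwa [e2, Equiv.hasSum_iff] at h





/-- If `S` has distribution `Ψ_κ(μ, σ²)`, then `Var(S) = σ² + (σ² + κ - μ)·π_κ`. -/
theorem psi_variance
    {Ω : Type*} [MeasurableSpace Ω] (P : Measure Ω) [IsProbabilityMeasure P]
    (S : Ω → ℤ) (hS : Measurable S)
    (μ σ2 : ℝ) (hσ : 0 < σ2) (κ : ℤ)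
    (h1 : μ - σ2 < (κ : ℝ)) (h2 : (κ : ℝ) < μ + σ2 + 1)
    (hrec_up : ∀ j : ℤ, κ + 1 ≤ j →
      (σ2 + (j : ℝ) - μ) * (P {ω | S ω = j}).toReal
        = σ2 * (P {ω | S ω = j - 1}).toReal)
    (hrec_mid : (σ2 + (κ : ℝ) - μ) * (P {ω | S ω = κ}).toReal
        = (σ2 + μ - (κ : ℝ) + 1) * (P {ω | S ω = κ - 1}).toReal)
    (hrec_down : ∀ j : ℤ, j ≤ κ - 1 →
      σ2 * (P {ω | S ω = j}).toReal
        = (σ2 + μ - (j : ℝ) + 1) * (P {ω | S ω = j - 1}).toReal) :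
    ∫ ω, ((S ω : ℝ) - μ) ^ 2 ∂P = σ2 + (σ2 + (κ : ℝ) - μ) * (P {ω | S ω = κ}).toReal := by
  classical
  set p : ℤ → ℝ := fun j => (P {ω | S ω = j}).toReal with hp
  have hpj : ∀ j : ℤ, p j = (P {ω | S ω = j}).toReal := fun _ => rfl
  have hp0 : ∀ j, 0 ≤ p j := fun j => ENNReal.toReal_nonneg
  have hfin : ∀ j : ℤ, P {ω | S ω = j} ≠ ⊤ := fun j => measure_ne_top P _
  have hcq : (0:ℝ) < σ2 + ((κ : ℝ) - μ) + 1 := by linarith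
  have hcr : (0:ℝ) < σ2 + (μ - (κ : ℝ) + 1) + 1 := by linarith
  set q : ℕ → ℝ := fun n => p (κ + n) with hqd
  set r : ℕ → ℝ := fun n => p (κ - 1 - n) with hrd
  have hq0 : ∀ n, 0 ≤ q n := fun n => hp0 _
  have hr0 : ∀ n, 0 ≤ r n := fun n => hp0 _
  -- recurrences in ℕ form
  have hrecq : ∀ n : ℕ, (σ2 + ((κ : ℝ) - μ) + 1 + (n : ℝ)) * q (n + 1) = σ2 * q n := by
    intro n
    have h := hrec_up (κ + n + 1) (by omega)
    rw [← hpj, ← hpj] at h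
    have e1 : κ + (n : ℤ) + 1 - 1 = κ + n := by ring
    rw [e1] at h
    have e2 : q (n + 1) = p (κ + (n : ℤ) + 1) := by
      rw [hqd]; congr 1; push_cast; ring
    rw [e2]
    push_cast at h ⊢
    linear_combination h
  have hrecr : ∀ n : ℕ, (σ2 + (μ - (κ : ℝ) + 1) + 1 + (n : ℝ)) * r (n + 1) = σ2 * r n := by
    intro n
    have h := hrec_down (κ - 1 - n) (by omega)
    rw [← hpj, ← hpj] at h
    have e2 : r (n + 1) = p (κ - 1 - (n : ℤ) - 1) := by
      rw [hrd]; congr 1; push_cast; ring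
    rw [e2]
    push_cast at h ⊢
    linear_combination -h
  -- total mass one
  have hmeas : ∀ j : ℤ, MeasurableSet {ω | S ω = j} := fun j =>
    hS (measurableSet_singleton j)
  have hdisj : Pairwise (Function.onFun Disjoint fun j : ℤ => {ω | S ω = j}) := by
    intro i j hij
    simp only [Function.onFun, Set.disjoint_left]
    intro ω hi hj
    exact hij (hi.symm.trans hj)
  have htsum1 : ∑' j : ℤ, P {ω | S ω = j} = 1 := by
    rw [← measure_iUnion hdisj hmeas]
    have : ⋃ j : ℤ, {ω | S ω = j} = Set.univ := by
      ext ω; simp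
    rw [this, measure_univ]
  have hsump : Summable p :=
    ENNReal.summable_toReal (by rw [htsum1]; exact ENNReal.one_ne_top)
  have hsump1 : ∑' j : ℤ, p j = 1 := by
    rw [hp, ← ENNReal.tsum_toReal_eq hfin, htsum1, ENNReal.toReal_one]
  have hsumq : Summable q := by
    have hinj : Function.Injective (fun n : ℕ => κ + (n : ℤ)) := by
      intro a b hab; simpa using hab
    exact hsump.comp_injective hinj
  have hsumr : Summable r := by
    have hinj : Function.Injective (fun n : ℕ => κ - 1 - (n : ℤ)) := by
      intro a b hab
      simp only at hab; omega
    exact hsump.comp_injective hinj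
  have hAB : (∑' n : ℕ, q n) + (∑' n : ℕ, r n) = 1 := by
    have := (int_split κ (f := p) hsumq hsumr).tsum_eq
    rw [hsump1] at this
    exact this.symm
  -- tail sums
  obtain ⟨hSqQ, hUQ, hTQ⟩ := tail_sum (b := (κ : ℝ) - μ) hσ hcq hq0 hrecq
  obtain ⟨hSqR, hUR, hTR⟩ := tail_sum (b := μ - (κ : ℝ) + 1) hσ hcr hr0 hrecr
  -- the second-moment function
  set F : ℤ → ℝ := fun j => ((j : ℝ) - μ) ^ 2 * p j with hFd
  have hFq : (fun n : ℕ => F (κ + n)) = fun n : ℕ => (((κ : ℝ) - μ) + (n : ℝ)) ^ 2 * q n := by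
    funext n; rw [hFd, hqd]; push_cast; ring
  have hFr : (fun n : ℕ => F (κ - 1 - n))
      = fun n : ℕ => ((μ - (κ : ℝ) + 1) + (n : ℝ)) ^ 2 * r n := by
    funext n; rw [hFd, hrd]; push_cast; ring
  have hFqs : Summable fun n : ℕ => F (κ + n) := by rw [hFq]; exact hSqQ
  have hFrs : Summable fun n : ℕ => F (κ - 1 - n) := by rw [hFr]; exact hSqR
  have hFhas : HasSum F ((∑' n : ℕ, F (κ + n)) + ∑' n : ℕ, F (κ - 1 - n)) :=
    int_split κ hFqs hFrs
  have hFsum : Summable F := hFhas.summable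
  have hF0 : ∀ j, 0 ≤ F j := fun j => mul_nonneg (sq_nonneg _) (hp0 j)
  have hFval : ∑' j : ℤ, F j
      = ((((κ : ℝ) - μ) ^ 2 * q 0 + σ2 * ((κ : ℝ) - μ) * q 0 + σ2 * ∑' n, q n)
        + ((μ - (κ : ℝ) + 1) ^ 2 * r 0 + σ2 * (μ - (κ : ℝ) + 1) * r 0 + σ2 * ∑' n, r n)) := by
    rw [hFhas.tsum_eq, hFq, hFr, hTQ, hTR]
  -- integral equals sum
  set f : ℤ → ℝ := fun j => ((j : ℝ) - μ) ^ 2 with hfd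
  have hfm : Measurable f := measurable_of_countable f
  set Q : Measure ℤ := Measure.map S P with hQd
  have hQs : ∀ j : ℤ, Q {j} = P {ω | S ω = j} := by
    intro j
    rw [hQd, Measure.map_apply hS (measurableSet_singleton j)]
    rfl
  have hfsm : AEStronglyMeasurable f Q := hfm.aestronglyMeasurable
  have hterm : ∀ j : ℤ, (‖f j‖₊ : ENNReal) * Q {j} = ENNReal.ofReal (F j) := by
    intro j
    have hnn : (0:ℝ) ≤ f j := by rw [hfd]; positivity
    have h1 : (‖f j‖₊ : ENNReal) = ENNReal.ofReal (f j) := Real.enorm_eq_ofReal hnn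
    rw [h1, hQs j, ← ENNReal.ofReal_toReal (hfin j), ← ENNReal.ofReal_mul hnn]
  have hfin_int : HasFiniteIntegral f Q := by
    show ∫⁻ j, (‖f j‖₊ : ENNReal) ∂Q < ⊤
    rw [lintegral_countable' (fun j => ((‖f j‖₊ : ENNReal)))]
    rw [tsum_congr hterm, ← ENNReal.ofReal_tsum_of_nonneg hF0 hFsum]
    exact ENNReal.ofReal_lt_top
  have hIntQ : Integrable f Q := ⟨hfsm, hfin_int⟩
  have hINT : ∫ ω, ((S ω : ℝ) - μ) ^ 2 ∂P = ∑' j : ℤ, F j := by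
    have h1 : ∫ ω, ((S ω : ℝ) - μ) ^ 2 ∂P = ∫ j, f j ∂Q := by
      rw [hQd, integral_map hS.aemeasurable hfsm]
    rw [h1, integral_countable' hIntQ]
    refine tsum_congr fun j => ?_
    rw [measureReal_def, hQs j, smul_eq_mul, mul_comm]
  rw [hINT, hFval]
  have hq0v : q 0 = p κ := by rw [hqd]; norm_num
  have hr0v : r 0 = p (κ - 1) := by rw [hrd]; norm_num
  have hmid : (σ2 + (κ : ℝ) - μ) * p κ = (σ2 + μ - (κ : ℝ) + 1) * p (κ - 1) := hrec_mid
  rw [hq0v, hr0v, ← hpj κ]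
  linear_combination σ2 * hAB + ((κ : ℝ) - μ - 1) * hmid
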